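/- Let 𝒜 ⊆ ℕ be any set, h ≥ 1 an integer, n ∈ ℕ and k ∈ ℕ. Then r_{𝒜,h}(n) ≤ r_{𝒜∪{k},h}(n) ≤ r_{𝒜,h}(n) + C(h, ⌊h/2⌋)·∑_{ℓ=1}^{h−1} r_{𝒜,h−ℓ}(n − ℓk) + δ_{n/h}(k), where C(h, ⌊h/2⌋) is the binomial coefficient 'h choose ⌊h/2⌋', δ_{n/h}(k) = 1 if h·k = n and 0 otherwise, and r_{𝒜,j}(m) := 0 when m < 0. -/

import Mathlib

open Filter Asymptotics

/-- `rA A h n` is the number of ordered `h`-tuples of elements of `A` summing to `n`. -/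
noncomputable def rA (A : Set ℕ) (h n : ℕ) : ℕ :=
  {t : Fin h → ℕ | (∀ i, t i ∈ A) ∧ ∑ i, t i = n}.ncard

open scoped Classical in
noncomputable def Fs (A : Set ℕ) (h n : ℕ) : Finset (Fin h → ℕ) :=
  (Finset.Nat.antidiagonalTuple h n).filter (fun t => ∀ i, t i ∈ A)


lemma mem_Fs {A : Set ℕ} {h n : ℕ} {t : Fin h → ℕ} :
    t ∈ Fs A h n ↔ (∀ i, t i ∈ A) ∧ ∑ i, t i = n := by
  simp [Fs, Finset.Nat.mem_antidiagonalTuple, and_comm]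

lemma rA_eq (A : Set ℕ) (h n : ℕ) : rA A h n = (Fs A h n).card := by
  rw [rA, ← Set.ncard_coe_finset]
  congr 1
  ext t
  simp [mem_Fs]

open scoped Classical in
lemma fiber_card_le (A : Set ℕ) (h n k : ℕ) (S : Finset (Fin h)) :
    ((Finset.Nat.antidiagonalTuple h n).filter
      (fun t => (∀ i ∈ S, t i = k) ∧ ∀ i ∉ S, t i ∈ A)).card
      ≤ if S.card * k ≤ n then rA A (h - S.card) (n - S.card * k) else 0 := by
  have key : ∀ t ∈ (Finset.Nat.antidiagonalTuple h n).filter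
      (fun t => (∀ i ∈ S, t i = k) ∧ ∀ i ∉ S, t i ∈ A),
      (∑ i ∈ S, t i = S.card * k) ∧ ∑ i, t i = n := by
    intro t ht
    rw [Finset.mem_filter, Finset.Nat.mem_antidiagonalTuple] at ht
    refine ⟨?_, ht.1⟩
    rw [Finset.sum_congr rfl ht.2.1, Finset.sum_const, smul_eq_mul]
  by_cases hc : S.card * k ≤ n
  · rw [if_pos hc]
    have hcc : Sᶜ.card = h - S.card := by
      simp [Finset.card_compl]
    set e := Sᶜ.orderIsoOfFin hcc with he
    rw [rA_eq]
    apply Finset.card_le_card_of_injOn (fun t j => t (e j))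
    · intro t ht
      obtain ⟨h1, h2⟩ := key t ht
      rw [Finset.mem_coe, Finset.mem_filter] at ht
      rw [Finset.mem_coe, mem_Fs]
      constructor
      · intro j
        exact ht.2.2 _ (Finset.mem_compl.mp (e j).2)
      · have h3 : ∑ j, t (e j) = ∑ i ∈ Sᶜ, t i := by
          rw [← Finset.sum_coe_sort Sᶜ t]
          exact Equiv.sum_comp e.toEquiv (fun x => t x.1)
        rw [h3]
        have h4 := Finset.sum_add_sum_compl S t
        omega
    · intro t1 ht1 t2 ht2 heq
      simp only [Finset.coe_filter, Set.mem_setOf_eq] at ht1 ht2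
      funext i
      by_cases hi : i ∈ S
      · rw [ht1.2.1 i hi, ht2.2.1 i hi]
      · have hi' : i ∈ Sᶜ := Finset.mem_compl.mpr hi
        have : i = (e (e.symm ⟨i, hi'⟩) : Fin h) := by simp
        rw [this]
        exact congrFun heq (e.symm ⟨i, hi'⟩)
  · rw [if_neg hc]
    rw [Nat.le_zero, Finset.card_eq_zero, Finset.filter_eq_empty_iff]
    intro t ht hyp
    have : ∑ i ∈ S, t i = S.card * k := by
      rw [Finset.sum_congr rfl hyp.1, Finset.sum_const, smul_eq_mul]
    rw [Finset.Nat.mem_antidiagonalTuple] at ht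
    have hle : ∑ i ∈ S, t i ≤ ∑ i, t i :=
      Finset.sum_le_sum_of_subset (Finset.subset_univ S)
    omega


theorem stmt_2 (A : Set ℕ) (h : ℕ) (hh : 1 ≤ h) (n k : ℕ) :
    rA A h n ≤ rA (A ∪ {k}) h n ∧
    rA (A ∪ {k}) h n ≤ rA A h n +
      (h.choose (h / 2)) * (∑ ℓ ∈ Finset.Icc 1 (h - 1),
        if ℓ * k ≤ n then rA A (h - ℓ) (n - ℓ * k) else 0) +
      (if h * k = n then 1 else 0) := by
  classical
  constructor
  · rw [rA_eq, rA_eq]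
    apply Finset.card_le_card
    intro t ht
    rw [mem_Fs] at ht ⊢
    exact ⟨fun i => Set.mem_union_left _ (ht.1 i), ht.2⟩
  · set AT := Finset.Nat.antidiagonalTuple h n with hAT
    set B := AT.filter (fun t => (∀ i, t i ∈ A ∪ {k}) ∧ ¬ ∀ i, t i ∈ A) with hB
    set Φ : (Fin h → ℕ) → Finset (Fin h) :=
      fun t => Finset.univ.filter (fun i => t i ∉ A) with hΦ
    -- step 1 : split off B
    have step1 : rA (A ∪ {k}) h n ≤ rA A h n + B.card := by
      rw [rA_eq, rA_eq]
      calc (Fs (A ∪ {k}) h n).card ≤ (Fs A h n ∪ B).card := by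
            apply Finset.card_le_card
            intro t ht
            rw [mem_Fs] at ht
            by_cases hA : ∀ i, t i ∈ A
            · exact Finset.mem_union_left _ (mem_Fs.mpr ⟨hA, ht.2⟩)
            · refine Finset.mem_union_right _ ?_
              rw [hB, Finset.mem_filter, hAT, Finset.Nat.mem_antidiagonalTuple]
              exact ⟨ht.2, ht.1, hA⟩
        _ ≤ _ := Finset.card_union_le _ _
    -- membership facts about B
    have hBmem : ∀ t ∈ B, (∑ i, t i = n) ∧ (∀ i, t i ∈ A ∪ {k}) ∧ ¬ ∀ i, t i ∈ A := by
      intro t ht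
      rw [hB, Finset.mem_filter, hAT, Finset.Nat.mem_antidiagonalTuple] at ht
      exact ⟨ht.1, ht.2.1, ht.2.2⟩
    have hΦk : ∀ t ∈ B, ∀ i ∈ Φ t, t i = k := by
      intro t ht i hi
      rw [hΦ, Finset.mem_filter] at hi
      rcases (hBmem t ht).2.1 i with h1 | h1
      · exact absurd h1 hi.2
      · exact h1
    -- step 2: fiberwise over cardinality of Φ
    have step2 : B.card = ∑ ℓ ∈ Finset.Icc 1 h, (B.filter (fun t => (Φ t).card = ℓ)).card := by
      apply Finset.card_eq_sum_card_fiberwise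
      intro t ht
      rw [Finset.mem_coe, Finset.mem_Icc]
      constructor
      · rw [Nat.one_le_iff_ne_zero, ← Nat.pos_iff_ne_zero, Finset.card_pos]
        obtain ⟨i, hi⟩ := not_forall.mp (hBmem t ht).2.2
        exact ⟨i, by rw [hΦ]; simp [hi]⟩
      · calc (Φ t).card ≤ Finset.univ.card := Finset.card_le_card (Finset.subset_univ _)
          _ = h := Finset.card_fin h
    -- top term: ℓ = h
    have stepTop : (B.filter (fun t => (Φ t).card = h)).card ≤ if h * k = n then 1 else 0 := by
      have hall : ∀ t ∈ B.filter (fun t => (Φ t).card = h), t = fun _ => k := by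
        intro t ht
        rw [Finset.mem_filter] at ht
        have hΦu : Φ t = Finset.univ := Finset.eq_univ_of_card _ (by simpa using ht.2)
        funext i
        exact hΦk t ht.1 i (hΦu ▸ Finset.mem_univ i)
      by_cases hc : h * k = n
      · rw [if_pos hc]
        apply Finset.card_le_one.mpr
        intro a ha b hb
        rw [hall a ha, hall b hb]
      · rw [if_neg hc, Nat.le_zero, Finset.card_eq_zero, Finset.filter_eq_empty_iff]
        intro t ht hcard
        have := hall t (Finset.mem_filter.mpr ⟨ht, hcard⟩)
        have hsum := (hBmem t ht).1
        rw [this] at hsum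
        simp [Finset.sum_const, Finset.card_fin] at hsum
        exact hc hsum
    -- middle terms
    have stepMid : ∀ ℓ ∈ Finset.Icc 1 (h-1),
        (B.filter (fun t => (Φ t).card = ℓ)).card ≤
          h.choose ℓ * (if ℓ * k ≤ n then rA A (h - ℓ) (n - ℓ * k) else 0) := by
      intro ℓ hℓ
      have hfib : (B.filter (fun t => (Φ t).card = ℓ)).card =
          ∑ S ∈ Finset.univ.powersetCard ℓ,
            ((B.filter (fun t => (Φ t).card = ℓ)).filter (fun t => Φ t = S)).card := by
        apply Finset.card_eq_sum_card_fiberwise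
        intro t ht
        rw [Finset.mem_coe, Finset.mem_powersetCard]
        exact ⟨Finset.subset_univ _, (Finset.mem_filter.mp ht).2⟩
      rw [hfib]
      calc ∑ S ∈ Finset.univ.powersetCard ℓ,
            ((B.filter (fun t => (Φ t).card = ℓ)).filter (fun t => Φ t = S)).card
          ≤ ∑ S ∈ Finset.univ.powersetCard ℓ,
            (if ℓ * k ≤ n then rA A (h - ℓ) (n - ℓ * k) else 0) := by
            apply Finset.sum_le_sum
            intro S hS
            rw [Finset.mem_powersetCard] at hS
            have hSc : S.card = ℓ := hS.2
            calc ((B.filter (fun t => (Φ t).card = ℓ)).filter (fun t => Φ t = S)).card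
                ≤ (AT.filter (fun t => (∀ i ∈ S, t i = k) ∧ ∀ i ∉ S, t i ∈ A)).card := by
                  apply Finset.card_le_card
                  intro t ht
                  simp only [Finset.mem_filter] at ht
                  obtain ⟨⟨htB, _⟩, hΦS⟩ := ht
                  rw [Finset.mem_filter]
                  refine ⟨(Finset.mem_filter.mp htB).1, ?_, ?_⟩
                  · intro i hi
                    exact hΦk t htB i (hΦS ▸ hi)
                  · intro i hi
                    by_contra hiA
                    exact hi (hΦS ▸ (by rw [hΦ]; simp [hiA] : i ∈ Φ t))
              _ ≤ _ := by
                  have := fiber_card_le A h n k S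
                  rw [hSc] at this
                  exact this
        _ = h.choose ℓ * (if ℓ * k ≤ n then rA A (h - ℓ) (n - ℓ * k) else 0) := by
            rw [Finset.sum_const, smul_eq_mul, Finset.card_powersetCard, Finset.card_fin]
    -- combine
    have hIcc : Finset.Icc 1 h = insert h (Finset.Icc 1 (h-1)) := by
      ext x
      simp only [Finset.mem_Icc, Finset.mem_insert]
      omega
    have hnotmem : h ∉ Finset.Icc 1 (h-1) := by
      simp only [Finset.mem_Icc]
      omega
    rw [hIcc, Finset.sum_insert hnotmem] at step2
    have hmidsum : ∑ ℓ ∈ Finset.Icc 1 (h-1), (B.filter (fun t => (Φ t).card = ℓ)).card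
        ≤ h.choose (h/2) * ∑ ℓ ∈ Finset.Icc 1 (h-1),
            (if ℓ * k ≤ n then rA A (h - ℓ) (n - ℓ * k) else 0) := by
      rw [Finset.mul_sum]
      apply Finset.sum_le_sum
      intro ℓ hℓ
      calc (B.filter (fun t => (Φ t).card = ℓ)).card
          ≤ h.choose ℓ * (if ℓ * k ≤ n then rA A (h - ℓ) (n - ℓ * k) else 0) := stepMid ℓ hℓ
        _ ≤ h.choose (h/2) * (if ℓ * k ≤ n then rA A (h - ℓ) (n - ℓ * k) else 0) :=
            Nat.mul_le_mul_right _ (Nat.choose_le_middle ℓ h)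
    omega
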